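/- Every element of the commutator subgroup of the wreath product ℤ ≀ ℤ is a single commutator. -/

import Mathlib

/-- The shift action of `ℤ` on `⊕_{i∈ℤ} ℤ` (written multiplicatively), used to
form the restricted wreath product `ℤ ≀ ℤ`. -/
noncomputable def wrShift : Multiplicative ℤ →* MulAut (Multiplicative (ℤ →₀ ℤ)) where
  toFun z := AddEquiv.toMultiplicative (Finsupp.domCongr (Equiv.addRight z.toAdd))
  map_one' := by
    ext f : 1
    apply Multiplicative.toAdd.injective
    ext i
    simp
    rfl
  map_mul' z w := by
    ext f : 1
    apply Multiplicative.toAdd.injective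
    ext i
    have h : (Equiv.symm (Equiv.addRight (Multiplicative.toAdd w) *
        Equiv.addRight (Multiplicative.toAdd z))) i
        = i + -Multiplicative.toAdd z + -Multiplicative.toAdd w := by
      rw [Equiv.symm_apply_eq]
      simp [Equiv.Perm.mul_apply]
      ring
    simp [MulAut.mul_apply, h]

/-- The restricted wreath product `ℤ ≀ ℤ = (⊕_{i∈ℤ} ℤ) ⋊ ℤ`, with `ℤ` acting by
shifting coordinates. -/
noncomputable abbrev WreathZZ :=
  SemidirectProduct (Multiplicative (ℤ →₀ ℤ)) (Multiplicative ℤ) wrShift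

lemma wrShift_apply (z : Multiplicative ℤ) (x : Multiplicative (ℤ →₀ ℤ)) (i : ℤ) :
    Multiplicative.toAdd (wrShift z x) i = Multiplicative.toAdd x (i - Multiplicative.toAdd z) := by
  simp [wrShift]
  rfl

noncomputable def sumHom : WreathZZ →* Multiplicative ℤ where
  toFun g := Multiplicative.ofAdd ((Multiplicative.toAdd g.left).sum fun _ x => x)
  map_one' := by simp
  map_mul' g h := by
    have : Multiplicative.toAdd (g * h).left
        = Multiplicative.toAdd g.left +
          Finsupp.equivMapDomain (Equiv.addRight (Multiplicative.toAdd g.right))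
            (Multiplicative.toAdd h.left) := rfl
    simp only [this]
    rw [Finsupp.sum_add_index' (fun _ => rfl) (fun _ _ _ => rfl)]
    rw [Finsupp.equivMapDomain_eq_mapDomain,
      Finsupp.sum_mapDomain_index (fun _ => rfl) (fun _ _ _ => rfl)]
    simp

lemma abelian_ker {g : WreathZZ} (ψ : WreathZZ →* Multiplicative ℤ)
    (hg : g ∈ commutator WreathZZ) : ψ g = 1 := by
  have : commutator WreathZZ ≤ ψ.ker := by
    rw [commutator_def, Subgroup.commutator_le]
    intro a _ b _
    rw [MonoidHom.mem_ker, map_commutatorElement, commutatorElement_eq_one_iff_commute]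
    exact mul_comm _ _
  exact this hg

/-- Every element of the commutator subgroup of the wreath product `ℤ ≀ ℤ` is a
single commutator `[a,b] = a⁻¹b⁻¹ab`. -/
theorem wreath_product_every_element_is_commutator (g : WreathZZ)
    (hg : g ∈ commutator WreathZZ) :
    ∃ a b : WreathZZ, g = a⁻¹ * b⁻¹ * a * b := by
  set f : ℤ →₀ ℤ := Multiplicative.toAdd g.left with hf
  have hz : g.right = 1 := abelian_ker SemidirectProduct.rightHom hg
  have hs : ∑ i ∈ f.support, f i = 0 := by
    have := abelian_ker sumHom hg
    simpa [sumHom, Finsupp.sum, -ofAdd_sum] using this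
  set Fn : ℤ → ℤ := fun n => ∑ i ∈ f.support, if i < n then f i else 0 with hFn
  have hfin : (Function.support Fn).Finite := by
    apply Set.Finite.subset (Set.Finite.biUnion f.support.finite_toSet
      (fun i _ => Set.Finite.biUnion f.support.finite_toSet (fun j _ => Set.finite_Ioc i j)))
    intro n hn
    have h1 : ∃ i ∈ f.support, i < n := by
      by_contra h
      push_neg at h
      exact hn (Finset.sum_eq_zero fun i hi => by simp [not_lt.mpr (h i hi)])
    have h2 : ∃ j ∈ f.support, n ≤ j := by
      by_contra h
      push_neg at h
      refine hn ?_
      show (∑ i ∈ f.support, if i < n then f i else 0) = 0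
      exact (Finset.sum_congr rfl fun i hi => if_pos (h i hi)).trans hs
    obtain ⟨i, hi, hi'⟩ := h1
    obtain ⟨j, hj, hj'⟩ := h2
    exact Set.mem_biUnion hi (Set.mem_biUnion hj ⟨hi', hj'⟩)
  set F : ℤ →₀ ℤ := Finsupp.ofSupportFinite Fn hfin with hF
  have hFa : ∀ n, F n = Fn n := fun n => rfl
  have key : ∀ i, Fn (i + 1) - Fn i = f i := by
    intro i
    rw [hFn]
    rw [← Finset.sum_sub_distrib]
    have : ∀ j ∈ f.support,
        ((if j < i + 1 then f j else 0) - (if j < i then f j else 0)) =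
        if j = i then f j else 0 := by
      intro j _
      split_ifs <;> omega
    rw [Finset.sum_congr rfl this, Finset.sum_ite_eq' f.support i f]
    split_ifs with h
    · rfl
    · exact (Finsupp.notMem_support_iff.mp h).symm
  refine ⟨SemidirectProduct.inl (Multiplicative.ofAdd F),
    SemidirectProduct.inr (Multiplicative.ofAdd 1), ?_⟩
  ext : 1
  · apply Multiplicative.toAdd.injective
    ext i
    show f i = _
    simp only [SemidirectProduct.mul_left, SemidirectProduct.inv_left,
      SemidirectProduct.inv_right, SemidirectProduct.mul_right,
      SemidirectProduct.left_inl, SemidirectProduct.right_inl,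
      SemidirectProduct.left_inr, SemidirectProduct.right_inr,
      toAdd_mul, Finsupp.add_apply, wrShift_apply, map_one, MulAut.one_apply]
    rw [← key i]
    have h1 : i - (Multiplicative.toAdd (1 : Multiplicative ℤ)⁻¹ +
        Multiplicative.toAdd (Multiplicative.ofAdd (1 : ℤ))⁻¹) = i + 1 := by
      simp
    simp only [toAdd_inv, toAdd_ofAdd, toAdd_one, Finsupp.neg_apply, h1,
      Finsupp.coe_zero, Pi.zero_apply, Finsupp.coe_neg]
    rw [hFa, hFa]
    ring_nf
  · simp [hz, SemidirectProduct.mul_right]
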